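/- Let k and m be natural numbers and set n = k + 2m. The number of flat (n,k)-dangles, i.e. the number of involutions of Fin n with exactly k fixed points, equals n! / (k! · 2^m · m!). -/

import Mathlib

open Finset

namespace Stmt13Aux

abbrev DS (n k : ℕ) : Type :=
  {a : Fin n → Fin n // a ∘ a = id ∧ (Finset.univ.filter fun x => a x = x).card = k}

lemma apply_apply {n : ℕ} {a : Fin n → Fin n} (ha : a ∘ a = id) (x : Fin n) : a (a x) = x :=
  congrFun ha x

/-! ### One-step restriction: involutions fixing the last point -/

def down {n : ℕ} (a : Fin (n + 1) → Fin (n + 1)) (x : Fin n) : Fin n :=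
  if h : (a x.castSucc).val < n then ⟨_, h⟩ else x

def up {n : ℕ} (b : Fin n → Fin n) : Fin (n + 1) → Fin (n + 1) :=
  Fin.snoc (fun x => (b x).castSucc) (Fin.last n)

lemma lt_of_fix {n : ℕ} (a : Fin (n + 1) → Fin (n + 1)) (ha : a ∘ a = id)
    (hl : a (Fin.last n) = Fin.last n) (x : Fin n) : (a x.castSucc).val < n := by
  rcases Nat.lt_or_ge (a x.castSucc).val n with h | h
  · exact h
  · exfalso
    have h1 : a x.castSucc = Fin.last n := by
      have := (a x.castSucc).isLt
      apply Fin.ext; simp only [Fin.val_last]; omega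
    have h2 : x.castSucc = Fin.last n := by
      have := congrArg a h1
      rwa [apply_apply ha, hl] at this
    have h3 := x.isLt
    have h4 := congrArg Fin.val h2
    simp only [Fin.coe_castSucc, Fin.val_last] at h4
    omega

lemma down_val {n : ℕ} {a : Fin (n + 1) → Fin (n + 1)} (ha : a ∘ a = id)
    (hl : a (Fin.last n) = Fin.last n) (x : Fin n) :
    ((down a x : Fin n) : ℕ) = (a x.castSucc).val := by
  rw [down, dif_pos (lt_of_fix a ha hl x)]

lemma down_fix_iff {n : ℕ} {a : Fin (n + 1) → Fin (n + 1)} (ha : a ∘ a = id)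
    (hl : a (Fin.last n) = Fin.last n) (x : Fin n) :
    down a x = x ↔ a x.castSucc = x.castSucc := by
  rw [Fin.ext_iff, Fin.ext_iff, down_val ha hl, Fin.coe_castSucc]

lemma down_invol {n : ℕ} {a : Fin (n + 1) → Fin (n + 1)} (ha : a ∘ a = id)
    (hl : a (Fin.last n) = Fin.last n) : down a ∘ down a = id := by
  funext x
  have h1 : (down a x).castSucc = a x.castSucc := by
    apply Fin.ext
    rw [Fin.coe_castSucc, down_val ha hl]
  apply Fin.ext
  show ((down a (down a x) : Fin n) : ℕ) = x.val
  rw [down_val ha hl, h1, apply_apply ha, Fin.coe_castSucc]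

lemma card_down {n : ℕ} {a : Fin (n + 1) → Fin (n + 1)} (ha : a ∘ a = id)
    (hl : a (Fin.last n) = Fin.last n) :
    (Finset.univ.filter fun x => a x = x).card
      = (Finset.univ.filter fun x => down a x = x).card + 1 := by
  rw [Finset.card_filter, Finset.card_filter, Fin.sum_univ_castSucc]
  congr 1
  · apply Finset.sum_congr rfl
    intro x _
    exact if_congr (down_fix_iff ha hl x).symm rfl rfl
  · simp [hl]

lemma up_last {n : ℕ} (b : Fin n → Fin n) : up b (Fin.last n) = Fin.last n :=
  Fin.snoc_last _ _

lemma up_castSucc {n : ℕ} (b : Fin n → Fin n) (x : Fin n) :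
    up b x.castSucc = (b x).castSucc :=
  Fin.snoc_castSucc _ _ _

lemma up_invol {n : ℕ} {b : Fin n → Fin n} (hb : b ∘ b = id) : up b ∘ up b = id := by
  funext y
  induction y using Fin.lastCases with
  | last => show up b (up b (Fin.last n)) = Fin.last n; rw [up_last, up_last]
  | cast x =>
    show up b (up b x.castSucc) = x.castSucc
    rw [up_castSucc, up_castSucc, apply_apply hb]

lemma down_up {n : ℕ} (b : Fin n → Fin n) : down (up b) = b := by
  funext x
  have hv : ((up b) x.castSucc).val = (b x).val := by
    rw [up_castSucc, Fin.coe_castSucc]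
  have hlt : ((up b) x.castSucc).val < n := by rw [hv]; exact (b x).isLt
  apply Fin.ext
  show ((down (up b) x : Fin n) : ℕ) = (b x).val
  rw [down, dif_pos hlt]
  exact hv

lemma up_down {n : ℕ} {a : Fin (n + 1) → Fin (n + 1)} (ha : a ∘ a = id)
    (hl : a (Fin.last n) = Fin.last n) : up (down a) = a := by
  funext y
  induction y using Fin.lastCases with
  | last => rw [up_last, hl]
  | cast x =>
    rw [up_castSucc]
    apply Fin.ext
    rw [Fin.coe_castSucc, down_val ha hl]

def e1 (n k : ℕ) :
    {p : DS (n + 1) (k + 1) // p.1 (Fin.last n) = Fin.last n} ≃ DS n k where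
  toFun p := ⟨down p.1.1, down_invol p.1.2.1 p.2, by
    have h := card_down p.1.2.1 p.2
    have h2 := p.1.2.2
    omega⟩
  invFun b := ⟨⟨up b.1, up_invol b.2.1, by
    have h := card_down (up_invol b.2.1) (up_last b.1)
    rw [down_up] at h
    rw [h, b.2.2]⟩, up_last b.1⟩
  left_inv p := Subtype.ext (Subtype.ext (up_down p.1.2.1 p.2))
  right_inv b := Subtype.ext (down_up b.1)

/-! ### Two-step restriction: involutions swapping the top two points -/

def down2 {n : ℕ} (a : Fin (n + 2) → Fin (n + 2)) (x : Fin n) : Fin n :=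
  if h : (a x.castSucc.castSucc).val < n then ⟨_, h⟩ else x

def up2 {n : ℕ} (b : Fin n → Fin n) : Fin (n + 2) → Fin (n + 2) :=
  Fin.snoc (Fin.snoc (fun x => (b x).castSucc.castSucc) (Fin.last (n + 1)))
    ((Fin.last n).castSucc)

section Two

variable {n : ℕ}

lemma t0_val : (((Fin.last n).castSucc : Fin (n + 2)) : ℕ) = n := by simp
lemma t1_val : ((Fin.last (n + 1) : Fin (n + 2)) : ℕ) = n + 1 := rfl

lemma swap_top {a : Fin (n + 2) → Fin (n + 2)} (ha : a ∘ a = id)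
    (hl : a (Fin.last (n + 1)) = (Fin.last n).castSucc) :
    a ((Fin.last n).castSucc) = Fin.last (n + 1) := by
  have := congrArg a hl
  rw [apply_apply ha] at this
  exact this.symm

lemma lt2 {a : Fin (n + 2) → Fin (n + 2)} (ha : a ∘ a = id)
    (hl : a (Fin.last (n + 1)) = (Fin.last n).castSucc) (x : Fin n) :
    (a x.castSucc.castSucc).val < n := by
  have hx : (x.castSucc.castSucc : Fin (n + 2)).val = x.val := by simp
  have hxlt := x.isLt
  rcases Nat.lt_or_ge (a x.castSucc.castSucc).val n with h | h
  · exact h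
  · exfalso
    have hbig := (a x.castSucc.castSucc).isLt
    rcases Nat.lt_or_ge (a x.castSucc.castSucc).val (n + 1) with h1 | h1
    · -- value = n, so a x = t0
      have he : a x.castSucc.castSucc = (Fin.last n).castSucc := by
        apply Fin.ext; rw [t0_val]; omega
      have := congrArg a he
      rw [apply_apply ha, swap_top ha hl] at this
      have := congrArg Fin.val this
      rw [hx, t1_val] at this
      omega
    · -- value = n + 1, so a x = t1
      have he : a x.castSucc.castSucc = Fin.last (n + 1) := by
        apply Fin.ext; rw [t1_val]; omega
      have := congrArg a he
      rw [apply_apply ha, hl] at this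
      have := congrArg Fin.val this
      rw [hx, t0_val] at this
      omega

lemma down2_val {a : Fin (n + 2) → Fin (n + 2)} (ha : a ∘ a = id)
    (hl : a (Fin.last (n + 1)) = (Fin.last n).castSucc) (x : Fin n) :
    ((down2 a x : Fin n) : ℕ) = (a x.castSucc.castSucc).val := by
  rw [down2, dif_pos (lt2 ha hl x)]

lemma down2_fix_iff {a : Fin (n + 2) → Fin (n + 2)} (ha : a ∘ a = id)
    (hl : a (Fin.last (n + 1)) = (Fin.last n).castSucc) (x : Fin n) :
    down2 a x = x ↔ a x.castSucc.castSucc = x.castSucc.castSucc := by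
  rw [Fin.ext_iff, Fin.ext_iff, down2_val ha hl]
  simp

lemma down2_invol {a : Fin (n + 2) → Fin (n + 2)} (ha : a ∘ a = id)
    (hl : a (Fin.last (n + 1)) = (Fin.last n).castSucc) : down2 a ∘ down2 a = id := by
  funext x
  have h1 : (down2 a x).castSucc.castSucc = a x.castSucc.castSucc := by
    apply Fin.ext
    simp only [Fin.coe_castSucc]
    rw [down2_val ha hl]
  apply Fin.ext
  show ((down2 a (down2 a x) : Fin n) : ℕ) = x.val
  rw [down2_val ha hl, h1, apply_apply ha]
  simp

lemma card_down2 {a : Fin (n + 2) → Fin (n + 2)} (ha : a ∘ a = id)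
    (hl : a (Fin.last (n + 1)) = (Fin.last n).castSucc) :
    (Finset.univ.filter fun x => a x = x).card
      = (Finset.univ.filter fun x => down2 a x = x).card := by
  have ht1 : ¬ a (Fin.last (n + 1)) = Fin.last (n + 1) := by
    rw [hl]
    intro h
    have := congrArg Fin.val h
    rw [t0_val, t1_val] at this
    omega
  have ht0 : ¬ a ((Fin.last n).castSucc) = (Fin.last n).castSucc := by
    rw [swap_top ha hl]
    intro h
    have := congrArg Fin.val h
    rw [t0_val, t1_val] at this
    omega
  rw [Finset.card_filter, Finset.card_filter, Fin.sum_univ_castSucc,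
    Fin.sum_univ_castSucc]
  rw [if_neg ht1, if_neg ht0]
  simp only [add_zero]
  apply Finset.sum_congr rfl
  intro x _
  exact if_congr (down2_fix_iff ha hl x).symm rfl rfl

lemma up2_t1 (b : Fin n → Fin n) : up2 b (Fin.last (n + 1)) = (Fin.last n).castSucc :=
  Fin.snoc_last _ _

lemma up2_t0 (b : Fin n → Fin n) : up2 b ((Fin.last n).castSucc) = Fin.last (n + 1) := by
  rw [up2, Fin.snoc_castSucc, Fin.snoc_last]

lemma up2_cc (b : Fin n → Fin n) (x : Fin n) :
    up2 b x.castSucc.castSucc = (b x).castSucc.castSucc := by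
  rw [up2, Fin.snoc_castSucc, Fin.snoc_castSucc]

lemma up2_invol {b : Fin n → Fin n} (hb : b ∘ b = id) : up2 b ∘ up2 b = id := by
  funext y
  show up2 b (up2 b y) = y
  induction y using Fin.lastCases with
  | last => rw [up2_t1, up2_t0]
  | cast y' =>
    induction y' using Fin.lastCases with
    | last => rw [up2_t0, up2_t1]
    | cast x => rw [up2_cc, up2_cc, apply_apply hb]

lemma down2_up2 (b : Fin n → Fin n) : down2 (up2 b) = b := by
  funext x
  have hv : ((up2 b) x.castSucc.castSucc).val = (b x).val := by
    rw [up2_cc]; simp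
  have hlt : ((up2 b) x.castSucc.castSucc).val < n := by rw [hv]; exact (b x).isLt
  apply Fin.ext
  show ((down2 (up2 b) x : Fin n) : ℕ) = (b x).val
  rw [down2, dif_pos hlt]
  exact hv

lemma up2_down2 {a : Fin (n + 2) → Fin (n + 2)} (ha : a ∘ a = id)
    (hl : a (Fin.last (n + 1)) = (Fin.last n).castSucc) : up2 (down2 a) = a := by
  funext y
  induction y using Fin.lastCases with
  | last => rw [up2_t1, hl]
  | cast y' =>
    induction y' using Fin.lastCases with
    | last => rw [up2_t0, swap_top ha hl]
    | cast x =>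
      rw [up2_cc]
      apply Fin.ext
      simp only [Fin.coe_castSucc]
      rw [down2_val ha hl]

end Two

def e2 (n k : ℕ) :
    {p : DS (n + 2) k // p.1 (Fin.last (n + 1)) = (Fin.last n).castSucc} ≃ DS n k where
  toFun p := ⟨down2 p.1.1, down2_invol p.1.2.1 p.2, by
    have h := card_down2 p.1.2.1 p.2
    have h2 := p.1.2.2
    omega⟩
  invFun b := ⟨⟨up2 b.1, up2_invol b.2.1, by
    have h := card_down2 (up2_invol b.2.1) (up2_t1 b.1)
    rw [down2_up2] at h
    rw [h, b.2.2]⟩, up2_t1 b.1⟩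
  left_inv p := Subtype.ext (Subtype.ext (up2_down2 p.1.2.1 p.2))
  right_inv b := Subtype.ext (down2_up2 b.1)

/-! ### Conjugation -/

lemma card_conj {N : ℕ} (a : Fin N → Fin N) (e : Equiv.Perm (Fin N)) :
    (Finset.univ.filter fun z => e (a (e.symm z)) = z).card
      = (Finset.univ.filter fun x => a x = x).card := by
  refine (Finset.card_equiv e ?_).symm
  intro x
  simp only [Finset.mem_filter, Finset.mem_univ, true_and, Equiv.symm_apply_apply]
  constructor
  · intro h; rw [h]
  · intro h; exact e.injective h

def conjE (N k : ℕ) (e : Equiv.Perm (Fin N)) (x0 y0 : Fin N) :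
    {p : DS N k // p.1 x0 = y0} ≃ {p : DS N k // p.1 (e x0) = e y0} where
  toFun p := ⟨⟨fun z => e (p.1.1 (e.symm z)), by
      funext z
      simp only [Function.comp_apply, Equiv.symm_apply_apply, apply_apply p.1.2.1, id_eq,
        Equiv.apply_symm_apply], by rw [card_conj p.1.1 e, p.1.2.2]⟩, by
    simp only [Equiv.symm_apply_apply, p.2]⟩
  invFun q := ⟨⟨fun z => e.symm (q.1.1 (e z)), by
      funext z
      simp only [Function.comp_apply, Equiv.apply_symm_apply, apply_apply q.1.2.1, id_eq,
        Equiv.symm_apply_apply], by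
      have : (Finset.univ.filter fun z => e.symm (q.1.1 (e z)) = z).card
          = (Finset.univ.filter fun x => q.1.1 x = x).card := by
        have := card_conj (fun z => e.symm (q.1.1 (e z))) e
        simp only [Equiv.symm_apply_apply, Equiv.apply_symm_apply] at this
        rw [← this]
      rw [this, q.1.2.2]⟩, by
    have hq : q.1.1 (e x0) = e y0 := q.2
    show e.symm (q.1.1 (e x0)) = y0
    rw [hq, Equiv.symm_apply_apply]⟩
  left_inv p := by
    apply Subtype.ext; apply Subtype.ext
    funext z
    simp only [Equiv.apply_symm_apply, Equiv.symm_apply_apply]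
  right_inv q := by
    apply Subtype.ext; apply Subtype.ext
    funext z
    simp only [Equiv.apply_symm_apply, Equiv.symm_apply_apply]

/-! ### Decomposition by the image of the last point -/

lemma decomp (N k : ℕ) :
    Nat.card (DS (N + 1) k) =
      Nat.card {p : DS (N + 1) k // p.1 (Fin.last N) = Fin.last N} +
      ∑ j : Fin N, Nat.card {p : DS (N + 1) k // p.1 (Fin.last N) = j.castSucc} := by
  rw [← Nat.card_congr (Equiv.sigmaFiberEquiv (fun p : DS (N + 1) k => p.1 (Fin.last N)))]
  rw [Nat.card_eq_fintype_card, Fintype.card_sigma, Fin.sum_univ_castSucc, add_comm]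
  simp only [Nat.card_eq_fintype_card]

lemma isEmpty_fixLast_of_k0 (N : ℕ) :
    IsEmpty {p : DS (N + 1) 0 // p.1 (Fin.last N) = Fin.last N} := by
  constructor
  rintro ⟨⟨a, ha, hc⟩, hl⟩
  have hl' : a (Fin.last N) = Fin.last N := hl
  have : Fin.last N ∈ Finset.univ.filter fun x => a x = x := by
    simp [hl']
  rw [Finset.card_eq_zero] at hc
  rw [hc] at this
  exact absurd this (Finset.notMem_empty _)

lemma isEmpty_pair_of_m0 (N k : ℕ) (hNk : N + 1 = k) (j : Fin N) :
    IsEmpty {p : DS (N + 1) k // p.1 (Fin.last N) = j.castSucc} := by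
  constructor
  rintro ⟨⟨a, ha, hc⟩, hl0⟩
  have hl : a (Fin.last N) = j.castSucc := hl0
  have hne : (j.castSucc : Fin (N + 1)) ≠ Fin.last N := (Fin.castSucc_lt_last j).ne
  have hsub : (Finset.univ.filter fun x => a x = x)
      ⊆ Finset.univ \ {Fin.last N, j.castSucc} := by
    intro x hx
    simp only [Finset.mem_filter, Finset.mem_univ, true_and] at hx
    simp only [Finset.mem_sdiff, Finset.mem_univ, true_and, Finset.mem_insert,
      Finset.mem_singleton]
    push_neg
    constructor
    · rintro rfl
      rw [hx] at hl
      exact hne hl.symm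
    · rintro rfl
      have : a (a (Fin.last N)) = Fin.last N := apply_apply ha _
      rw [hl, hx] at this
      exact hne this
  have hcard2 : ({Fin.last N, j.castSucc} : Finset (Fin (N + 1))).card = 2 := by
    rw [Finset.card_insert_of_notMem (by simp [hne.symm]), Finset.card_singleton]
  have := Finset.card_le_card hsub
  rw [Finset.card_sdiff_of_subset (Finset.subset_univ _), hcard2, hc] at this
  simp only [Finset.card_univ, Fintype.card_fin] at this
  omega

lemma pair_card (n k : ℕ) (j : Fin (n + 1)) :
    Nat.card {p : DS (n + 2) k // p.1 (Fin.last (n + 1)) = j.castSucc}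
      = Nat.card (DS n k) := by
  set e : Equiv.Perm (Fin (n + 2)) :=
    Equiv.swap (j.castSucc) ((Fin.last n).castSucc) with he
  have hlast : e (Fin.last (n + 1)) = Fin.last (n + 1) := by
    apply Equiv.swap_apply_of_ne_of_ne
    · exact (Fin.castSucc_lt_last j).ne'
    · exact (Fin.castSucc_lt_last (Fin.last n)).ne'
  have hj : e (j.castSucc) = (Fin.last n).castSucc := Equiv.swap_apply_left _ _
  have := Nat.card_congr (conjE (n + 2) k e (Fin.last (n + 1)) (j.castSucc))
  rw [this]
  have heq : ∀ p : DS (n + 2) k,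
      (p.1 (e (Fin.last (n + 1))) = e (j.castSucc))
        ↔ (p.1 (Fin.last (n + 1)) = (Fin.last n).castSucc) := by
    intro p
    rw [hlast, hj]
  rw [Nat.card_congr (Equiv.subtypeEquivRight heq)]
  exact Nat.card_congr (e2 n k)

/-! ### The main induction -/

lemma key (N : ℕ) : ∀ k m : ℕ, N = k + 2 * m →
    Nat.card (DS N k) * (Nat.factorial k * 2 ^ m * Nat.factorial m) = Nat.factorial N := by
  induction N using Nat.strong_induction_on with
  | _ N ih =>
    intro k m hN
    match N, hN with
    | 0, hN =>
      obtain ⟨rfl, rfl⟩ : k = 0 ∧ m = 0 := by omega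
      have h1 : Nat.card (DS 0 0) = 1 := by
        rw [Nat.card_eq_one_iff_unique]
        refine ⟨⟨fun p q => Subtype.ext (funext fun x => x.elim0)⟩,
          ⟨⟨fun x => x, by funext x; exact x.elim0, by simp⟩⟩⟩
      rw [h1]; simp
    | (N + 1), hN =>
      rw [decomp]
      rcases m with _ | m'
      · -- m = 0 : no pairs possible, k = N + 1
        have hk : k = N + 1 := by omega
        subst hk
        have hBzero : ∀ j : Fin N,
            Nat.card {p : DS (N + 1) (N + 1) // p.1 (Fin.last N) = j.castSucc} = 0 :=
          fun j => @Nat.card_of_isEmpty _ (isEmpty_pair_of_m0 N (N + 1) rfl j)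
        rw [Finset.sum_congr rfl (fun j _ => hBzero j), Finset.sum_const_zero, add_zero]
        rw [Nat.card_congr (e1 N N)]
        have hIH := ih N (by omega) N 0 (by omega)
        simp only [pow_zero, Nat.factorial_zero, mul_one] at hIH ⊢
        rw [Nat.factorial_succ N]
        calc Nat.card (DS N N) * ((N + 1) * Nat.factorial N)
            = (N + 1) * (Nat.card (DS N N) * Nat.factorial N) := by ring
          _ = (N + 1) * Nat.factorial N := by rw [hIH]
      · -- m = m' + 1 : N ≥ 1
        obtain ⟨n, rfl⟩ : ∃ n, N = n + 1 := by
          rcases N with _ | n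
          · omega
          · exact ⟨n, rfl⟩
        have hB : ∀ j : Fin (n + 1),
            Nat.card {p : DS (n + 2) k // p.1 (Fin.last (n + 1)) = j.castSucc}
              = Nat.card (DS n k) := fun j => pair_card n k j
        rw [Finset.sum_congr rfl (fun j _ => hB j), Finset.sum_const, Finset.card_univ,
          Fintype.card_fin, smul_eq_mul]
        have hIHB := ih n (by omega) k m' (by omega)
        rcases k with _ | k'
        · -- k = 0 : the fixed-last part is empty
          have hA : Nat.card {p : DS (n + 2) 0 // p.1 (Fin.last (n + 1)) = Fin.last (n + 1)}
              = 0 := @Nat.card_of_isEmpty _ (isEmpty_fixLast_of_k0 (n + 1))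
          rw [hA, zero_add]
          have h2m : n + 2 = 2 * (m' + 1) := by omega
          rw [Nat.factorial_succ (n + 1)]
          calc (n + 1) * Nat.card (DS n 0)
                * (Nat.factorial 0 * 2 ^ (m' + 1) * Nat.factorial (m' + 1))
              = (n + 1) * (2 * (m' + 1))
                * (Nat.card (DS n 0) * (Nat.factorial 0 * 2 ^ m' * Nat.factorial m')) := by
                rw [pow_succ, Nat.factorial_succ]; ring
            _ = (n + 1) * (2 * (m' + 1)) * Nat.factorial n := by rw [hIHB]
            _ = (n + 2) * ((n + 1) * Nat.factorial n) := by rw [← h2m]; ring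
            _ = (n + 2) * Nat.factorial (n + 1) := by rw [Nat.factorial_succ]
        · -- k = k' + 1
          rw [Nat.card_congr (e1 (n + 1) k')]
          have hIHA := ih (n + 1) (by omega) k' (m' + 1) (by omega)
          rw [Nat.factorial_succ (n + 1)]
          have hsum : n + 2 = (k' + 1) + 2 * (m' + 1) := by omega
          calc (Nat.card (DS (n + 1) k') + (n + 1) * Nat.card (DS n (k' + 1)))
                * (Nat.factorial (k' + 1) * 2 ^ (m' + 1) * Nat.factorial (m' + 1))
              = (k' + 1) * (Nat.card (DS (n + 1) k')
                  * (Nat.factorial k' * 2 ^ (m' + 1) * Nat.factorial (m' + 1)))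
                + (n + 1) * (2 * (m' + 1)) * (Nat.card (DS n (k' + 1))
                  * (Nat.factorial (k' + 1) * 2 ^ m' * Nat.factorial m')) := by
                rw [Nat.factorial_succ k', pow_succ, Nat.factorial_succ m']; ring
            _ = (k' + 1) * Nat.factorial (n + 1)
                + (n + 1) * (2 * (m' + 1)) * Nat.factorial n := by rw [hIHA, hIHB]
            _ = (k' + 1) * Nat.factorial (n + 1)
                + (2 * (m' + 1)) * ((n + 1) * Nat.factorial n) := by ring
            _ = (k' + 1) * Nat.factorial (n + 1)
                + (2 * (m' + 1)) * Nat.factorial (n + 1) := by rw [Nat.factorial_succ]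
            _ = ((k' + 1) + 2 * (m' + 1)) * Nat.factorial (n + 1) := by ring
            _ = (n + 2) * Nat.factorial (n + 1) := by rw [← hsum]

end Stmt13Aux

/-- The number of flat `(n, k)`-dangles, i.e. of involutions of `Fin n` with exactly
`k` fixed points, where `n = k + 2m`, equals `n! / (k! · 2^m · m!)`. -/
theorem stmt13 (k m : ℕ) :
    Nat.card {a : Fin (k + 2 * m) → Fin (k + 2 * m) //
        a ∘ a = id ∧ (Finset.univ.filter fun x => a x = x).card = k} =
      Nat.factorial (k + 2 * m) / (Nat.factorial k * 2 ^ m * Nat.factorial m) := by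
  have h := Stmt13Aux.key (k + 2 * m) k m rfl
  have hd : 0 < Nat.factorial k * 2 ^ m * Nat.factorial m := by positivity
  rw [← h, Nat.mul_div_cancel _ hd]
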